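/- arXiv:2012.10781 — 3 statements merged into one kernel-verified Lean document; each statement's English description precedes it below -/
import Mathlib

section
/- Let n ≥ 1, let λ > 0, and let f : ℝⁿ → ℂ be integrable and square-integrable, such that the Fourier transform 𝓕f vanishes outside the closed ball of radius λ centered at the origin. Then ‖f‖_{L²(ℝⁿ)} ≤ (volume of the closed ball of radius λ in ℝⁿ)^{1/2} · ‖f‖_{L¹(ℝⁿ)}. In particular ‖f‖_{L²} ≤ C_n λ^{n/2} ‖f‖_{L¹}, which is the case p₁ = 1, p₂ = 2 of Bernstein's inequality. -/
open MeasureTheory Metric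
open scoped FourierTransform ENNReal

section BernsteinAux

open Real
open scoped RealInnerProductSpace

variable {V : Type*} [NormedAddCommGroup V] [InnerProductSpace ℝ V] [FiniteDimensional ℝ V]
  [MeasurableSpace V] [BorelSpace V]

lemma innerLflip : (innerₗ V).flip = innerₗ V := by
  ext x y
  exact real_inner_comm x y

lemma mult_formula {u v : V → ℂ} (hu : Integrable u volume) (hv : Integrable v volume) :
    ∫ ξ, 𝓕 u ξ * v ξ = ∫ x, u x * 𝓕 v x := by
  have := VectorFourier.integral_fourierIntegral_smul_eq_flip (L := innerₗ V)
    (ν := (volume : Measure V)) Real.continuous_fourierChar continuous_inner hu hv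
  rw [innerLflip] at this
  simp only [smul_eq_mul] at this; exact this

lemma integrable_fourier_of_compsupp {g : V → ℂ} (hg : ContDiff ℝ ((⊤ : ℕ∞) : WithTop ℕ∞) g)
    (hsupp : HasCompactSupport g) : Integrable (𝓕 g) volume := by
  have hgi : Integrable g volume := hg.continuous.integrable_of_hasCompactSupport hsupp
  have hco : Continuous (𝓕 g) :=
    VectorFourier.fourierIntegral_continuous Real.continuous_fourierChar continuous_inner hgi
  set m : ℕ := Module.finrank ℝ V + 1 with hm
  have h'f : ∀ (k n : ℕ), (k : ℕ∞) ≤ ⊤ → (n : ℕ∞) ≤ ⊤ →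
      Integrable (fun v : V ↦ ‖v‖ ^ k * ‖iteratedFDeriv ℝ n g v‖) volume := by
    intro k n _ _
    apply Continuous.integrable_of_hasCompactSupport
    · exact (continuous_norm.pow k).mul (hg.continuous_iteratedFDeriv (by exact_mod_cast le_top)).norm
    · exact ((hsupp.iteratedFDeriv n).norm).mul_left
  have key : ∀ j : ℕ, ∃ C : ℝ, ∀ w : V, ‖w‖ ^ j * ‖𝓕 g w‖ ≤ C := by
    intro j
    refine ⟨(2 * π) ^ 0 * (2 * 0 + 2) ^ j *
      ∑ p ∈ Finset.range (0 + 1) ×ˢ Finset.range (j + 1),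
        ∫ v : V, ‖v‖ ^ p.1 * ‖iteratedFDeriv ℝ p.2 g v‖, fun w ↦ ?_⟩
    have := Real.pow_mul_norm_iteratedFDeriv_fourier_le (K := (⊤:ℕ∞)) (N := (⊤:ℕ∞))
      hg h'f (k := 0) (n := j) le_top le_top w
    simpa [norm_iteratedFDeriv_zero] using this
  obtain ⟨C0, hC0⟩ := key 0
  obtain ⟨Cm, hCm⟩ := key m
  have hC0' : 0 ≤ C0 := le_trans (by positivity) (hC0 0)
  have hCm' : 0 ≤ Cm := le_trans (by positivity) (hCm 0)
  have hbound : ∀ w : V, ‖𝓕 g w‖ ≤ (2 ^ m * (C0 + Cm)) * (1 + ‖w‖) ^ (-(m : ℝ)) := by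
    intro w
    have h1 : (0:ℝ) < 1 + ‖w‖ := by positivity
    have hrw : (1 + ‖w‖) ^ (-(m : ℝ)) = ((1 + ‖w‖) ^ m)⁻¹ := by
      rw [Real.rpow_neg h1.le, Real.rpow_natCast]
    rw [hrw, ← div_eq_mul_inv, le_div_iff₀ (by positivity)]
    calc ‖𝓕 g w‖ * (1 + ‖w‖) ^ m ≤ ‖𝓕 g w‖ * (2 ^ m * (1 + ‖w‖ ^ m)) := by
          gcongr
          calc (1 + ‖w‖) ^ m ≤ (2 * max 1 ‖w‖) ^ m := by
                gcongr
                rcases le_total ‖w‖ 1 with h | h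
                · calc 1 + ‖w‖ ≤ 2 := by linarith
                    _ ≤ 2 * max 1 ‖w‖ := by nlinarith [le_max_left (1:ℝ) ‖w‖]
                · calc 1 + ‖w‖ ≤ 2 * ‖w‖ := by linarith
                    _ ≤ 2 * max 1 ‖w‖ := by nlinarith [le_max_right (1:ℝ) ‖w‖]
            _ = 2 ^ m * (max 1 ‖w‖) ^ m := by rw [mul_pow]
            _ ≤ 2 ^ m * (1 + ‖w‖ ^ m) := by
                gcongr
                rcases max_cases (1:ℝ) ‖w‖ with ⟨h, _⟩ | ⟨h, _⟩ <;> rw [h]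
                · nlinarith [pow_nonneg (norm_nonneg w) m, one_pow (M := ℝ) m]
                · nlinarith [pow_nonneg (norm_nonneg w) m]
      _ = 2 ^ m * (‖𝓕 g w‖ + ‖w‖ ^ m * ‖𝓕 g w‖) := by ring
      _ ≤ 2 ^ m * (C0 + Cm) := by
          gcongr
          · simpa using hC0 w
          · exact hCm w
  have hmaj : Integrable (fun w : V ↦ (2 ^ m * (C0 + Cm)) * (1 + ‖w‖) ^ (-(m : ℝ))) volume := by
    apply Integrable.const_mul
    apply integrable_one_add_norm
    rw [hm]
    push_cast
    linarith
  exact hmaj.mono' hco.aestronglyMeasurable (Filter.Eventually.of_forall hbound)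

lemma my_integrable_comp_neg {u : V → ℂ} (hu : Integrable u volume) :
    Integrable (fun x : V ↦ u (-x)) volume := by
  have h := ((Measure.measurePreserving_neg (volume : Measure V)).integrable_comp_emb
    (measurableEmbedding_neg (α := V))).2 hu
  exact h

lemma my_continuous_fourierIntegral {u : V → ℂ} (hu : Integrable u volume) :
    Continuous (𝓕 u) :=
  VectorFourier.fourierIntegral_continuous Real.continuous_fourierChar continuous_inner hu

lemma my_ae_inversion [CompleteSpace V] {f : V → ℂ} (hf : Integrable f volume)
    (hFf : Integrable (𝓕 f) volume) :
    f =ᵐ[volume] 𝓕⁻ (𝓕 f) := by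
  have hinv_cont : Continuous (𝓕⁻ (𝓕 f)) := by
    rw [Real.fourierInv_eq_fourier_comp_neg]
    exact my_continuous_fourierIntegral (my_integrable_comp_neg hFf)
  apply ae_eq_of_integral_contDiff_smul_eq hf.locallyIntegrable hinv_cont.locallyIntegrable
  intro g hgd hgs
  set G : V → ℂ := fun x ↦ (g x : ℂ) with hG
  have hGdiff : ContDiff ℝ ((⊤ : ℕ∞) : WithTop ℕ∞) G := Complex.ofRealCLM.contDiff.comp hgd
  have hGsupp : HasCompactSupport G := hgs.comp_left Complex.ofReal_zero
  have hGcont : Continuous G := hGdiff.continuous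
  have hGint : Integrable G volume := hGcont.integrable_of_hasCompactSupport hGsupp
  have hFG : Integrable (𝓕 G) volume := integrable_fourier_of_compsupp hGdiff hGsupp
  have hGneg : Integrable (fun x : V ↦ G (-x)) volume := my_integrable_comp_neg hGint
  have hFinvG : Integrable (𝓕⁻ G) volume := by
    rw [Real.fourierInv_eq_fourier_comp_neg]
    exact integrable_fourier_of_compsupp (hGdiff.comp contDiff_neg)
      (hGsupp.comp_homeomorph (Homeomorph.neg V))
  have step1 : ∫ x, G x * (𝓕⁻ (𝓕 f)) x = ∫ x, G (-x) * 𝓕 (𝓕 f) x := by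
    rw [← integral_neg_eq_self (fun x ↦ G (-x) * 𝓕 (𝓕 f) x) volume]
    simp [Real.fourierInv_eq_fourier_neg]
  have step2 : ∫ x, G (-x) * 𝓕 (𝓕 f) x = ∫ ξ, 𝓕 f ξ * 𝓕 (fun x ↦ G (-x)) ξ := by
    have := mult_formula hFf hGneg
    simpa [mul_comm] using this
  have step3 : 𝓕 (fun x : V ↦ G (-x)) = 𝓕⁻ G :=
    (Real.fourierInv_eq_fourier_comp_neg G).symm
  have step4 : ∫ ξ, 𝓕 f ξ * 𝓕⁻ G ξ = ∫ x, f x * 𝓕 (𝓕⁻ G) x := mult_formula hf hFinvG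
  have step5 : 𝓕 (𝓕⁻ G) = G := hGcont.fourier_fourierInv_eq hGint hFG
  calc ∫ x, g x • f x = ∫ x, f x * G x := by
        simp_rw [hG, Complex.real_smul, mul_comm]
      _ = ∫ x, f x * 𝓕 (𝓕⁻ G) x := by rw [step5]
      _ = ∫ ξ, 𝓕 f ξ * 𝓕⁻ G ξ := step4.symm
      _ = ∫ ξ, 𝓕 f ξ * 𝓕 (fun x ↦ G (-x)) ξ := by rw [step3]
      _ = ∫ x, G (-x) * 𝓕 (𝓕 f) x := step2.symm
      _ = ∫ x, G x * (𝓕⁻ (𝓕 f)) x := step1.symm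
      _ = ∫ x, g x • (𝓕⁻ (𝓕 f)) x := by simp_rw [hG, Complex.real_smul]
  rfl

end BernsteinAux

/-- Bernstein's inequality, case `p₁ = 1`, `p₂ = 2`: an integrable and square-integrable
function on `ℝⁿ` whose Fourier transform is supported in the closed ball of radius `λ`
satisfies `‖f‖_{L²} ≤ (vol (closedBall 0 λ))^{1/2} ‖f‖_{L¹}`. -/
theorem bernstein_one_two (n : ℕ) (hn : 1 ≤ n) (lam : ℝ) (hlam : 0 < lam)
    (f : EuclideanSpace ℝ (Fin n) → ℂ)
    (hint : Integrable f (volume : Measure (EuclideanSpace ℝ (Fin n))))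
    (hL2 : MemLp f 2 (volume : Measure (EuclideanSpace ℝ (Fin n))))
    (hsupp : ∀ ξ : EuclideanSpace ℝ (Fin n),
      ξ ∉ closedBall (0 : EuclideanSpace ℝ (Fin n)) lam → 𝓕 f ξ = 0) :
    (eLpNorm f 2 (volume : Measure (EuclideanSpace ℝ (Fin n)))).toReal ≤
      (volume (closedBall (0 : EuclideanSpace ℝ (Fin n)) lam)).toReal ^ ((1 : ℝ) / 2) *
        (eLpNorm f 1 (volume : Measure (EuclideanSpace ℝ (Fin n)))).toReal := by
  set s : Set (EuclideanSpace ℝ (Fin n)) := closedBall 0 lam with hs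
  have hFc : Continuous (𝓕 f) := my_continuous_fourierIntegral hint
  have hFsupp : HasCompactSupport (𝓕 f) :=
    HasCompactSupport.intro (isCompact_closedBall (0 : EuclideanSpace ℝ (Fin n)) lam) hsupp
  have hFi : Integrable (𝓕 f) volume := hFc.integrable_of_hasCompactSupport hFsupp
  have hae : f =ᵐ[volume] 𝓕⁻ (𝓕 f) := my_ae_inversion hint hFi
  set B : ℝ := ∫ x : EuclideanSpace ℝ (Fin n), ‖f x‖ with hB
  have hB0 : 0 ≤ B := integral_nonneg fun x ↦ norm_nonneg _
  have hFbound : ∀ ξ : EuclideanSpace ℝ (Fin n), ‖𝓕 f ξ‖ ≤ B := fun ξ ↦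
    VectorFourier.norm_fourierIntegral_le_integral_norm _ _ _ _ _
  have hsfin : volume s ≠ ⊤ := (measure_closedBall_lt_top).ne
  have hFL1 : ∫ ξ : EuclideanSpace ℝ (Fin n), ‖𝓕 f ξ‖ ≤ (volume s).toReal * B := by
    rw [← setIntegral_eq_integral_of_forall_compl_eq_zero
      (s := s) (fun x hx ↦ by simp [hsupp x hx])]
    calc ∫ ξ in s, ‖𝓕 f ξ‖ ≤ ∫ _ξ in s, B := by
          apply setIntegral_mono_on
            (hFc.norm.continuousOn.integrableOn_compact (isCompact_closedBall _ _))
            (integrableOn_const hsfin) measurableSet_closedBall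
          exact fun x _ ↦ hFbound x
      _ = (volume s).toReal * B := by rw [setIntegral_const, smul_eq_mul]; rfl
  have hM : ∀ᵐ x : EuclideanSpace ℝ (Fin n) ∂volume, ‖f x‖ ≤ (volume s).toReal * B := by
    filter_upwards [hae] with x hx
    rw [hx]
    calc ‖𝓕⁻ (𝓕 f) x‖ = ‖𝓕 (𝓕 f) (-x)‖ := by
          rw [Real.fourierInv_eq_fourier_neg]
      _ ≤ ∫ ξ : EuclideanSpace ℝ (Fin n), ‖𝓕 f ξ‖ :=
          VectorFourier.norm_fourierIntegral_le_integral_norm _ _ _ _ _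
      _ ≤ (volume s).toReal * B := hFL1
  -- ENNReal bookkeeping
  set B1 : ℝ≥0∞ := eLpNorm f 1 volume with hB1
  have hBe : B1 = ENNReal.ofReal B := by
    rw [hB1, eLpNorm_one_eq_lintegral_enorm, ← ofReal_integral_norm_eq_lintegral_enorm hint]
  have hB1top : B1 ≠ ⊤ := by rw [hBe]; exact ENNReal.ofReal_ne_top
  have hMe : ∀ᵐ x : EuclideanSpace ℝ (Fin n) ∂volume, (‖f x‖₊ : ℝ≥0∞) ≤ volume s * B1 := by
    filter_upwards [hM] with x hx
    calc (‖f x‖₊ : ℝ≥0∞) = ENNReal.ofReal ‖f x‖ := (ofReal_norm _).symm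
      _ ≤ ENNReal.ofReal ((volume s).toReal * B) := ENNReal.ofReal_le_ofReal hx
      _ = volume s * B1 := by
          rw [ENNReal.ofReal_mul ENNReal.toReal_nonneg, ENNReal.ofReal_toReal hsfin, hBe]
  have hlint : ∫⁻ x : EuclideanSpace ℝ (Fin n), (‖f x‖₊ : ℝ≥0∞) ^ (2:ℝ) ∂volume
      ≤ volume s * B1 * B1 := by
    calc ∫⁻ x : EuclideanSpace ℝ (Fin n), (‖f x‖₊ : ℝ≥0∞) ^ (2:ℝ) ∂volume
        ≤ ∫⁻ x : EuclideanSpace ℝ (Fin n), (volume s * B1) * (‖f x‖₊ : ℝ≥0∞) ∂volume := by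
          apply lintegral_mono_ae
          filter_upwards [hMe] with x hx
          rw [show (2:ℝ) = ((2:ℕ):ℝ) by norm_num, ENNReal.rpow_natCast, pow_two]
          exact mul_le_mul_left hx _
      _ = (volume s * B1) * ∫⁻ x : EuclideanSpace ℝ (Fin n), (‖f x‖₊ : ℝ≥0∞) ∂volume :=
          lintegral_const_mul' _ _ (ENNReal.mul_ne_top hsfin hB1top)
      _ = volume s * B1 * B1 := by
          rw [hB1, eLpNorm_one_eq_lintegral_enorm]; rfl
  have h2 : eLpNorm f 2 volume ≤ (volume s) ^ ((1:ℝ)/2) * B1 := by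
    rw [eLpNorm_eq_lintegral_rpow_enorm_toReal two_ne_zero ENNReal.ofNat_ne_top]
    simp only [ENNReal.toReal_ofNat]
    calc (∫⁻ x : EuclideanSpace ℝ (Fin n), (‖f x‖₊ : ℝ≥0∞) ^ (2:ℝ) ∂volume) ^ ((1:ℝ)/2)
        ≤ (volume s * B1 * B1) ^ ((1:ℝ)/2) := ENNReal.rpow_le_rpow hlint (by norm_num)
      _ = (volume s) ^ ((1:ℝ)/2) * B1 := by
          rw [mul_assoc, ENNReal.mul_rpow_of_nonneg _ _ (by norm_num)]
          congr 1
          rw [← pow_two, ← ENNReal.rpow_natCast, ← ENNReal.rpow_mul]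
          norm_num
  have hvtop : (volume s) ^ ((1:ℝ)/2) ≠ ⊤ :=
    ENNReal.rpow_ne_top_of_nonneg (by norm_num) hsfin
  have hfinal := ENNReal.toReal_mono (ENNReal.mul_ne_top hvtop hB1top) h2
  rw [ENNReal.toReal_mul, ← ENNReal.toReal_rpow] at hfinal
  exact hfinal
end

section
/- Let (X, μ) be a probability space, let L > 0, d_i > 0, ε̄ > 0, δ ∈ [0, 3], q ∈ ℕ, and set λ_q = 2^q / L. Let B : X → ℝ³ be measurable with ∫_X ‖B‖³ dμ < ∞, and suppose: (i) there is a measurable set S ⊆ X with μ(S) ≤ (λ_q L)^{δ − 3} such that B = 0 almost everywhere outside S, and (ii) d_i λ_q² ∫_X ‖B‖³ dμ ≤ ε̄. Then the dyadic energy spectrum value satisfies λ_q^{−1} ∫_X ‖B‖² dμ ≤ (ε̄ / d_i)^{2/3} λ_q^{−7/3} (L λ_q)^{δ/3 − 1}. (This is the upper bound of Theorem 4.3: ℰ_b(k) ≲ (d_i^{−1} ε̄)^{2/3} k^{−7/3} (Lk)^{δ_b/3 − 1}, with the hypotheses spelling out the active-volume property of an intermittent field of intermittency dimension δ and the definition ε̄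 = sup_q d_i λ_q² ⟨|B_q|³⟩.) -/
open MeasureTheory

/-- Upper bound on the dyadic energy spectrum value (Theorem 4.3, upper bound):
with `λ_q = 2^q/L`, if the Littlewood–Paley piece `B` is active only on a set of measure
at most `(λ_q L)^{δ−3}` and `d_i λ_q² ⟨|B|³⟩ ≤ ε̄`, then
`λ_q⁻¹ ⟨|B|²⟩ ≤ (ε̄/d_i)^{2/3} λ_q^{−7/3} (L λ_q)^{δ/3 − 1}`. -/
theorem energy_spectrum_upper_bound {X : Type*} [MeasurableSpace X]
    (μ : Measure X) [IsProbabilityMeasure μ]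
    (L di ebar δ : ℝ) (hL : 0 < L) (hdi : 0 < di) (hebar : 0 < ebar)
    (hδ : δ ∈ Set.Icc (0 : ℝ) 3) (q : ℕ)
    (B : X → EuclideanSpace ℝ (Fin 3)) (hB : Measurable B)
    (hB3 : Integrable (fun x => ‖B x‖ ^ 3) μ)
    (S : Set X) (hS : MeasurableSet S)
    (hSvol : μ S ≤ ENNReal.ofReal ((((2 : ℝ) ^ q / L) * L) ^ (δ - 3)))
    (hvan : ∀ᵐ x ∂μ, x ∉ S → B x = 0)
    (hflux : di * ((2 : ℝ) ^ q / L) ^ 2 * ∫ x, ‖B x‖ ^ 3 ∂μ ≤ ebar) :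
    ((2 : ℝ) ^ q / L)⁻¹ * ∫ x, ‖B x‖ ^ 2 ∂μ ≤
      (ebar / di) ^ ((2 : ℝ) / 3) * ((2 : ℝ) ^ q / L) ^ (-(7 : ℝ) / 3) *
        (L * ((2 : ℝ) ^ q / L)) ^ (δ / 3 - 1) := by
  set lam : ℝ := (2 : ℝ) ^ q / L with hlam
  have hlam_pos : 0 < lam := div_pos (by positivity) hL
  -- MemLp B 3
  have hB3' : Integrable (fun x => ‖B x‖ ^ (3 : ℝ)) μ := by
    convert hB3 using 2 with x
    rw [← Real.rpow_natCast ‖B x‖ 3]; norm_num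
  have hmemB : MemLp B 3 μ := by
    rw [← memLp_norm_rpow_iff (q := 3) hB.aestronglyMeasurable (by norm_num) (by norm_num)]
    simp only [ENNReal.toReal_ofNat]
    rw [ENNReal.div_self (by norm_num) (by norm_num), memLp_one_iff_integrable]
    exact hB3'.congr (by filter_upwards with x; simp [Real.norm_of_nonneg (Real.rpow_nonneg (norm_nonneg _) _)])
  have hmemf : MemLp (fun x => ‖B x‖ ^ (2 : ℝ)) (ENNReal.ofReal (3/2)) μ := by
    have h := (memLp_norm_rpow_iff (q := 2) (p := 3) hB.aestronglyMeasurable (by norm_num) (by norm_num)).2 hmemB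
    have e2 : ENNReal.ofReal (3/2 : ℝ) = (3 : ENNReal) / 2 := by
      rw [ENNReal.ofReal_div_of_pos (by norm_num)] <;> norm_num
    rw [e2]
    simpa using h
  have hmemg : MemLp (S.indicator fun _ => (1 : ℝ)) (ENNReal.ofReal 3) μ :=
    memLp_indicator_const _ hS 1 (Or.inr (measure_ne_top μ S))
  have hpq : Real.HolderConjugate (3/2) 3 := by constructor <;> norm_num
  have hholder := integral_mul_le_Lp_mul_Lq_of_nonneg (μ := μ) hpq
    (f := fun x => ‖B x‖ ^ (2 : ℝ)) (g := S.indicator fun _ => (1 : ℝ))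
    (Filter.Eventually.of_forall fun x => Real.rpow_nonneg (norm_nonneg _) _)
    (Filter.Eventually.of_forall fun x => Set.indicator_nonneg (fun _ _ => zero_le_one) x)
    hmemf hmemg
  -- rewrite LHS of Hölder
  have h1 : ∫ x, ‖B x‖ ^ 2 ∂μ = ∫ x, ‖B x‖ ^ (2 : ℝ) * (S.indicator fun _ => (1 : ℝ)) x ∂μ := by
    refine integral_congr_ae ?_
    filter_upwards [hvan] with x hx
    by_cases hxS : x ∈ S
    · rw [Set.indicator_of_mem hxS, mul_one, ← Real.rpow_natCast ‖B x‖ 2]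
      norm_num
    · simp [Set.indicator_of_notMem hxS, hx hxS]
  have h2 : ∫ x, (‖B x‖ ^ (2:ℝ)) ^ (3/2 : ℝ) ∂μ = ∫ x, ‖B x‖ ^ 3 ∂μ := by
    refine integral_congr_ae (Filter.Eventually.of_forall fun x => ?_)
    show (‖B x‖ ^ (2:ℝ)) ^ (3/2 : ℝ) = ‖B x‖ ^ 3
    rw [← Real.rpow_natCast ‖B x‖ 3, ← Real.rpow_mul (norm_nonneg _)]
    norm_num
  have h3 : ∫ x, ((S.indicator fun _ => (1:ℝ)) x) ^ (3 : ℝ) ∂μ = (μ S).toReal := by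
    rw [show (fun x => ((S.indicator fun _ => (1:ℝ)) x) ^ (3:ℝ)) = S.indicator fun _ => (1:ℝ) from ?_]
    · rw [integral_indicator hS, setIntegral_const, smul_eq_mul, mul_one, measureReal_def]
    · ext x; by_cases hxS : x ∈ S <;> simp [hxS]
  rw [h1] at *
  rw [h2, h3] at hholder
  -- bounds
  have hI3nn : 0 ≤ ∫ x, ‖B x‖ ^ 3 ∂μ := integral_nonneg fun x => by positivity
  have hA : ∫ x, ‖B x‖ ^ 3 ∂μ ≤ ebar / (di * lam ^ 2) := by
    rw [le_div_iff₀ (by positivity)]; linarith [hflux]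
  have hM : (μ S).toReal ≤ (lam * L) ^ (δ - 3) := by
    have := ENNReal.toReal_mono (by simp) hSvol
    rwa [ENNReal.toReal_ofReal (Real.rpow_nonneg (by positivity) _)] at this
  have key : ∫ x, ‖B x‖ ^ (2:ℝ) * (S.indicator fun _ => (1 : ℝ)) x ∂μ ≤
      (ebar / (di * lam ^ 2)) ^ ((2:ℝ)/3) * ((lam * L) ^ (δ - 3)) ^ ((1:ℝ)/3) := by
    refine hholder.trans (mul_le_mul ?_ ?_ (Real.rpow_nonneg ENNReal.toReal_nonneg _) (Real.rpow_nonneg (by positivity) _))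
    · rw [show (1 / (3/2 : ℝ)) = (2:ℝ)/3 by norm_num]
      exact Real.rpow_le_rpow hI3nn hA (by norm_num)
    · exact Real.rpow_le_rpow ENNReal.toReal_nonneg hM (by norm_num)
  calc lam⁻¹ * ∫ x, ‖B x‖ ^ (2:ℝ) * (S.indicator fun _ => (1 : ℝ)) x ∂μ
      ≤ lam⁻¹ * ((ebar / (di * lam ^ 2)) ^ ((2:ℝ)/3) * ((lam * L) ^ (δ - 3)) ^ ((1:ℝ)/3)) := by
        exact mul_le_mul_of_nonneg_left key (by positivity)
    _ = (ebar / di) ^ ((2 : ℝ) / 3) * lam ^ (-(7 : ℝ) / 3) * (L * lam) ^ (δ / 3 - 1) := by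
        rw [show ebar / (di * lam ^ 2) = (ebar / di) / lam ^ 2 by ring,
          Real.div_rpow (by positivity) (by positivity),
          ← Real.rpow_natCast lam 2, ← Real.rpow_mul hlam_pos.le,
          ← Real.rpow_mul (by positivity : (0:ℝ) ≤ lam * L),
          show (δ-3)*(1/3:ℝ) = δ/3-1 by ring, mul_comm lam L]
        have e : (ebar/di)^(2/3:ℝ) / lam ^ (((2:ℕ):ℝ)*(2/3)) =
            (ebar/di)^(2/3:ℝ) * lam ^ (-(4:ℝ)/3) := by
          rw [div_eq_mul_inv, ← Real.rpow_neg hlam_pos.le]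
          norm_num
        have e2 : lam⁻¹ * lam ^ (-(4:ℝ)/3) = lam ^ (-(7:ℝ)/3) := by
          rw [← Real.rpow_neg_one lam, ← Real.rpow_add hlam_pos]
          norm_num
        rw [e, ← e2]
        ring
end

section
/- Let L > 0, let λ_p = 2^p / L for p ∈ ℤ, let q ∈ ℤ, and let y : ℤ → ℝ be nonnegative and finitely supported. Then (∑_{p ≥ q − 1} λ_p^{3/2} y_p)^{2/3} · (∑_{p < q} λ_p³ y_p)^{1/3} ≤ 3 ∑_{p ∈ ℤ} 2^{−|q − p|/3} λ_p² y_p. (This is the kernel estimate at the heart of the flux bound |∫ π_{b,q}| ≲ d_i ∑_p K_{q−p} λ_p² ‖B_p‖_{L³}³ with kernel K_j = λ_{|j|}^{−1/3}, in the lower-bound part of the proof of Theorem 4.3, applied with y_p = ‖B_p‖_{L³}³.) -/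
lemma flux_aux_coeff1 (L : ℝ) (hL : 0 < L) (q p : ℤ) (h : q - 1 ≤ p) :
    ((2:ℝ)^q/L)^((1:ℝ)/2) * ((2:ℝ)^p/L)^((3:ℝ)/2) ≤
      2 * ((2:ℝ)^(-((|q - p| : ℤ):ℝ)/3) * ((2:ℝ)^p/L)^2) := by
  have h2p : ((2:ℝ)^p) = (2:ℝ)^((p:ℝ)) := (Real.rpow_intCast 2 p).symm
  have h2q : ((2:ℝ)^q) = (2:ℝ)^((q:ℝ)) := (Real.rpow_intCast 2 q).symm
  rw [h2p, h2q, Real.div_rpow (by positivity) hL.le, Real.div_rpow (by positivity) hL.le,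
    div_pow, ← Real.rpow_natCast ((2:ℝ)^((p:ℝ))) 2, ← Real.rpow_natCast L 2,
    ← Real.rpow_mul (by norm_num : (0:ℝ) ≤ 2), ← Real.rpow_mul (by norm_num : (0:ℝ) ≤ 2),
    ← Real.rpow_mul (by norm_num : (0:ℝ) ≤ 2)]
  rw [div_mul_div_comm, ← Real.rpow_add (by norm_num : (0:ℝ) < 2),
    ← Real.rpow_add hL]
  have hLe : L ^ ((1:ℝ)/2 + (3:ℝ)/2) = L ^ (((2:ℕ)):ℝ) := by norm_num
  rw [hLe]
  have hrhs : (2:ℝ) * ((2:ℝ)^(-((|q - p| : ℤ):ℝ)/3) * ((2:ℝ)^((p:ℝ) * ((2:ℕ):ℝ)) / L ^ (((2:ℕ)):ℝ)))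
      = (2:ℝ) ^ (1 + (-((|q - p| : ℤ):ℝ)/3) + (p:ℝ) * ((2:ℕ):ℝ)) / L ^ (((2:ℕ)):ℝ) := by
    rw [Real.rpow_add (by norm_num : (0:ℝ) < 2), Real.rpow_add (by norm_num : (0:ℝ) < 2),
      Real.rpow_one]
    ring
  rw [hrhs]
  gcongr 2 ^ ?_ / _
  · norm_num
  · have habs : ((|q - p| : ℤ):ℝ) = |(q:ℝ) - (p:ℝ)| := by push_cast; ring_nf
    have hqp : (q:ℝ) - 1 ≤ (p:ℝ) := by exact_mod_cast h
    rw [habs]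
    rcases abs_cases ((q:ℝ) - (p:ℝ)) with ⟨he, _⟩ | ⟨he, _⟩ <;> rw [he] <;> push_cast <;> linarith

lemma flux_aux_coeff2 (L : ℝ) (hL : 0 < L) (q p : ℤ) (h : p < q) :
    ((2:ℝ)^q/L)⁻¹ * ((2:ℝ)^p/L)^3 ≤
      (2:ℝ)^(-((|q - p| : ℤ):ℝ)/3) * ((2:ℝ)^p/L)^2 := by
  have h2p : ((2:ℝ)^p) = (2:ℝ)^((p:ℝ)) := (Real.rpow_intCast 2 p).symm
  have h2q : ((2:ℝ)^q) = (2:ℝ)^((q:ℝ)) := (Real.rpow_intCast 2 q).symm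
  rw [h2p, h2q, div_pow, div_pow,
    ← Real.rpow_natCast ((2:ℝ)^((p:ℝ))) 3, ← Real.rpow_natCast ((2:ℝ)^((p:ℝ))) 2,
    ← Real.rpow_mul (by norm_num : (0:ℝ) ≤ 2), ← Real.rpow_mul (by norm_num : (0:ℝ) ≤ 2)]
  have hlhs : ((2:ℝ)^((q:ℝ))/L)⁻¹ * ((2:ℝ)^((p:ℝ) * ((3:ℕ):ℝ)) / L^(3:ℕ))
      = (2:ℝ) ^ (-(q:ℝ) + (p:ℝ) * ((3:ℕ):ℝ)) / L^(2:ℕ) := by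
    rw [Real.rpow_add (by norm_num : (0:ℝ) < 2), Real.rpow_neg (by norm_num : (0:ℝ) ≤ 2),
      inv_div]
    field_simp
  have hrhs : (2:ℝ)^(-((|q - p| : ℤ):ℝ)/3) * ((2:ℝ)^((p:ℝ) * ((2:ℕ):ℝ)) / L^(2:ℕ))
      = (2:ℝ) ^ (-((|q - p| : ℤ):ℝ)/3 + (p:ℝ) * ((2:ℕ):ℝ)) / L^(2:ℕ) := by
    rw [Real.rpow_add (by norm_num : (0:ℝ) < 2)]
    ring
  rw [hlhs, hrhs]
  gcongr 2 ^ ?_ / _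
  · norm_num
  · have habs : ((|q - p| : ℤ):ℝ) = |(q:ℝ) - (p:ℝ)| := by push_cast; ring_nf
    have hqp : (p:ℝ) + 1 ≤ (q:ℝ) := by exact_mod_cast h
    rw [habs]
    rcases abs_cases ((q:ℝ) - (p:ℝ)) with ⟨he, _⟩ | ⟨he, _⟩ <;> rw [he] <;> push_cast <;> linarith



/-- Kernel estimate for the flux bound (proof of Theorem 4.3, lower bound part):
with `λ_p = 2^p/L` and a nonnegative finitely supported sequence `y`,
`(∑_{p ≥ q−1} λ_p^{3/2} y_p)^{2/3} (∑_{p < q} λ_p³ y_p)^{1/3}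
  ≤ 3 ∑_p 2^{−|q−p|/3} λ_p² y_p`. -/
theorem flux_kernel_estimate (L : ℝ) (hL : 0 < L) (q : ℤ) (y : ℤ → ℝ)
    (hy : ∀ p, 0 ≤ y p) (hfin : (Function.support y).Finite) :
    (∑ᶠ (p : ℤ) (_ : q - 1 ≤ p), ((2 : ℝ) ^ p / L) ^ ((3 : ℝ) / 2) * y p) ^ ((2 : ℝ) / 3) *
      (∑ᶠ (p : ℤ) (_ : p < q), ((2 : ℝ) ^ p / L) ^ 3 * y p) ^ ((1 : ℝ) / 3) ≤
    3 * ∑ᶠ p : ℤ, (2 : ℝ) ^ (-((|q - p| : ℤ) : ℝ) / 3) * ((2 : ℝ) ^ p / L) ^ 2 * y p := by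
  classical
  set T := hfin.toFinset with hTdef
  have hmem : ∀ {x : ℤ}, y x ≠ 0 → x ∈ T := fun hx => hfin.mem_toFinset.mpr hx
  have hA : (∑ᶠ (p : ℤ) (_ : q - 1 ≤ p), ((2 : ℝ) ^ p / L) ^ ((3 : ℝ) / 2) * y p)
      = ∑ p ∈ T, (if q - 1 ≤ p then ((2 : ℝ) ^ p / L) ^ ((3 : ℝ) / 2) * y p else 0) := by
    simp only [finsum_eq_if]
    refine finsum_eq_finset_sum_of_support_subset _ ?_
    intro x hx
    refine hmem fun h0 => hx ?_
    simp [h0]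
  have hB : (∑ᶠ (p : ℤ) (_ : p < q), ((2 : ℝ) ^ p / L) ^ 3 * y p)
      = ∑ p ∈ T, (if p < q then ((2 : ℝ) ^ p / L) ^ 3 * y p else 0) := by
    simp only [finsum_eq_if]
    refine finsum_eq_finset_sum_of_support_subset _ ?_
    intro x hx
    refine hmem fun h0 => hx ?_
    simp [h0]
  have hS : (∑ᶠ p : ℤ, (2 : ℝ) ^ (-((|q - p| : ℤ) : ℝ) / 3) * ((2 : ℝ) ^ p / L) ^ 2 * y p)
      = ∑ p ∈ T, (2 : ℝ) ^ (-((|q - p| : ℤ) : ℝ) / 3) * ((2 : ℝ) ^ p / L) ^ 2 * y p := by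
    refine finsum_eq_finset_sum_of_support_subset _ ?_
    intro x hx
    refine hmem fun h0 => hx ?_
    simp [h0]
  rw [hA, hB, hS]
  set A := ∑ p ∈ T, (if q - 1 ≤ p then ((2 : ℝ) ^ p / L) ^ ((3 : ℝ) / 2) * y p else 0) with hAdef
  set B := ∑ p ∈ T, (if p < q then ((2 : ℝ) ^ p / L) ^ 3 * y p else 0) with hBdef
  set S := ∑ p ∈ T, (2 : ℝ) ^ (-((|q - p| : ℤ) : ℝ) / 3) * ((2 : ℝ) ^ p / L) ^ 2 * y p with hSdef
  have hA0 : 0 ≤ A := Finset.sum_nonneg fun i _ => by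
    split
    · exact mul_nonneg (by positivity) (hy i)
    · exact le_rfl
  have hB0 : 0 ≤ B := Finset.sum_nonneg fun i _ => by
    split
    · exact mul_nonneg (by positivity) (hy i)
    · exact le_rfl
  have hS0 : 0 ≤ S := Finset.sum_nonneg fun i _ =>
    mul_nonneg (mul_nonneg (by positivity) (by positivity)) (hy i)
  set lq : ℝ := (2:ℝ)^q/L with hlqdef
  have hlq : 0 < lq := div_pos (zpow_pos two_pos q) hL
  have key1 : lq ^ ((1:ℝ)/2) * A ≤ 2 * S := by
    rw [hAdef, hSdef, Finset.mul_sum, Finset.mul_sum]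
    refine Finset.sum_le_sum fun i _ => ?_
    by_cases hi : q - 1 ≤ i
    · rw [if_pos hi]
      have h1 := mul_le_mul_of_nonneg_right (flux_aux_coeff1 L hL q i hi) (hy i)
      calc lq ^ ((1:ℝ)/2) * (((2:ℝ)^i/L)^((3:ℝ)/2) * y i)
          = (lq ^ ((1:ℝ)/2) * ((2:ℝ)^i/L)^((3:ℝ)/2)) * y i := by ring
        _ ≤ (2 * ((2:ℝ)^(-((|q - i| : ℤ):ℝ)/3) * ((2:ℝ)^i/L)^2)) * y i := h1
        _ = 2 * ((2:ℝ)^(-((|q - i| : ℤ):ℝ)/3) * ((2:ℝ)^i/L)^2 * y i) := by ring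
    · rw [if_neg hi, mul_zero]
      have : 0 ≤ (2:ℝ)^(-((|q - i| : ℤ):ℝ)/3) * ((2:ℝ)^i/L)^2 * y i :=
        mul_nonneg (by positivity) (hy i)
      linarith
  have key2 : lq⁻¹ * B ≤ S := by
    rw [hBdef, hSdef, Finset.mul_sum]
    refine Finset.sum_le_sum fun i _ => ?_
    by_cases hi : i < q
    · rw [if_pos hi]
      have h1 := mul_le_mul_of_nonneg_right (flux_aux_coeff2 L hL q i hi) (hy i)
      calc lq⁻¹ * (((2:ℝ)^i/L)^3 * y i)
          = (lq⁻¹ * ((2:ℝ)^i/L)^3) * y i := by ring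
        _ ≤ ((2:ℝ)^(-((|q - i| : ℤ):ℝ)/3) * ((2:ℝ)^i/L)^2) * y i := h1
        _ = (2:ℝ)^(-((|q - i| : ℤ):ℝ)/3) * ((2:ℝ)^i/L)^2 * y i := by ring
    · rw [if_neg hi, mul_zero]
      exact mul_nonneg (by positivity) (hy i)
  have e1 : A ^ ((2:ℝ)/3) * B ^ ((1:ℝ)/3)
      = (lq ^ ((1:ℝ)/2) * A) ^ ((2:ℝ)/3) * (lq⁻¹ * B) ^ ((1:ℝ)/3) := by
    rw [Real.mul_rpow (by positivity) hA0, Real.mul_rpow (by positivity) hB0,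
      ← Real.rpow_mul hlq.le, ← Real.rpow_neg_one lq, ← Real.rpow_mul hlq.le]
    have : lq ^ ((1:ℝ)/2 * ((2:ℝ)/3)) * lq ^ ((-1:ℝ) * ((1:ℝ)/3))
        = lq ^ ((1:ℝ)/2 * ((2:ℝ)/3) + (-1:ℝ) * ((1:ℝ)/3)) := (Real.rpow_add hlq _ _).symm
    calc A ^ ((2:ℝ)/3) * B ^ ((1:ℝ)/3)
        = (lq ^ ((1:ℝ)/2 * ((2:ℝ)/3)) * lq ^ ((-1:ℝ) * ((1:ℝ)/3))) * (A ^ ((2:ℝ)/3) * B ^ ((1:ℝ)/3)) := by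
          rw [this]
          norm_num
      _ = lq ^ ((1:ℝ)/2 * ((2:ℝ)/3)) * A ^ ((2:ℝ)/3) * (lq ^ ((-1:ℝ) * ((1:ℝ)/3)) * B ^ ((1:ℝ)/3)) := by
          ring
  rw [e1]
  have geo := Real.geom_mean_le_arith_mean2_weighted (p₁ := lq ^ ((1:ℝ)/2) * A) (p₂ := lq⁻¹ * B) (by norm_num : (0:ℝ) ≤ 2/3)
    (by norm_num : (0:ℝ) ≤ 1/3) (mul_nonneg (by positivity) hA0)
    (mul_nonneg (by positivity) hB0) (by norm_num)
  calc (lq ^ ((1:ℝ)/2) * A) ^ ((2:ℝ)/3) * (lq⁻¹ * B) ^ ((1:ℝ)/3)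
      ≤ 2/3 * (lq ^ ((1:ℝ)/2) * A) + 1/3 * (lq⁻¹ * B) := geo
    _ ≤ 3 * S := by linarith
end
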